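/- Let F_int : ℕ → ℕ and F_ext : ℕ → ℕ be finitely supported functions such that F_int(k) = 0 whenever k is odd or k < 2, and let L, R, D₂, D₃ be natural numbers. Assume: (i) 3·L = Σ_k k·F_int(k) + Σ_k k·F_ext(k); (ii) F_int(2) = D₂ + 3·D₃; (iii) 3·R ≥ 3·D₂ + 6·D₃ + Σ_{k≥4} F_int(k). Then the divergence degree ω := -2·L + 3·(Σ_k F_int(k) - R) satisfies 3·ω ≤ -Σ_{k≥6} (2k - 9)·F_int(k) - 2·Σ_k k·F_ext(k) - 4·D₂ - 3·D₃ - 2·F_int(4) (as integers). -/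

import Mathlib

/-- Splitting lemma: a sum over the support of a finitely supported function
vanishing on odd arguments and arguments `< 2` decomposes as the value at `2`,
the value at `4`, and the sum over arguments `≥ 6`. -/
lemma sum_support_split (F : ℕ →₀ ℕ)
    (hvan : ∀ k : ℕ, (Odd k ∨ k < 2) → F k = 0)
    (g : ℕ → ℤ) (hg : ∀ k, F k = 0 → g k = 0) :
    ∑ k ∈ F.support, g k
      = g 2 + g 4 + ∑ k ∈ F.support.filter (fun k => 6 ≤ k), g k := by
  have hsub : F.support ⊆ F.support ∪ {2, 4} := Finset.subset_union_left
  have hT : ∑ k ∈ F.support, g k = ∑ k ∈ F.support ∪ {2, 4}, g k := by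
    refine Finset.sum_subset hsub ?_
    intro k _ hk
    exact hg k (Finsupp.notMem_support_iff.mp hk)
  rw [hT, ← Finset.sum_filter_add_sum_filter_not (F.support ∪ {2, 4}) (fun k => 6 ≤ k)]
  have hfilt1 : (F.support ∪ {2, 4}).filter (fun k => 6 ≤ k)
      = F.support.filter (fun k => 6 ≤ k) := by
    ext k
    simp only [Finset.mem_filter, Finset.mem_union, Finset.mem_insert,
      Finset.mem_singleton]
    constructor
    · rintro ⟨h | h, h6⟩
      · exact ⟨h, h6⟩
      · omega
    · rintro ⟨h, h6⟩; exact ⟨Or.inl h, h6⟩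
  have hfilt2 : (F.support ∪ {2, 4}).filter (fun k => ¬ 6 ≤ k) = {2, 4} := by
    ext k
    simp only [Finset.mem_filter, Finset.mem_union, Finset.mem_insert,
      Finset.mem_singleton, Finsupp.mem_support_iff]
    constructor
    · rintro ⟨h | h, h6⟩
      · -- k in support, k < 6: k is even and ≥ 2, so k = 2 or k = 4
        by_contra hc
        push_neg at hc
        rcases Nat.even_or_odd k with he | ho
        · have : k = 0 ∨ k = 2 ∨ k = 4 := by
            rcases he with ⟨m, hm⟩; omega
          rcases this with h0 | h2 | h4
          · exact h (hvan k (Or.inr (by omega)))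
          · exact hc.1 h2
          · exact hc.2 h4
        · exact h (hvan k (Or.inl ho))
      · exact h
    · rintro (h | h) <;> subst h <;> exact ⟨Or.inr (by simp), by omega⟩
  rw [hfilt1, hfilt2]
  have h24 : ∑ k ∈ ({2, 4} : Finset ℕ), g k = g 2 + g 4 := by
    simp [Finset.sum_insert, Finset.mem_singleton]
  rw [h24]; ring

/-- Key quantitative power-counting bound for the rank-3 Abelian colored
Boulatov model:
`3ω ≤ −Σ_{k≥6}(2k−9)F_int(k) − 2Σ_k k·F_ext(k) − 4D₂ − 3D₃ − 2F_int(4)`. -/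
theorem divergence_degree_bound_rank3
    (F_int F_ext : ℕ →₀ ℕ)
    (hvan : ∀ k : ℕ, (Odd k ∨ k < 2) → F_int k = 0)
    (L R D₂ D₃ : ℕ)
    (h1 : 3 * L = ∑ k ∈ F_int.support, k * F_int k
            + ∑ k ∈ F_ext.support, k * F_ext k)
    (h2 : F_int 2 = D₂ + 3 * D₃)
    (h3 : 3 * R ≥ 3 * D₂ + 6 * D₃
            + ∑ k ∈ F_int.support.filter (fun k => 4 ≤ k), F_int k) :
    3 * (-2 * (L : ℤ) + 3 * ((∑ k ∈ F_int.support, (F_int k : ℤ)) - (R : ℤ)))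
      ≤ -(∑ k ∈ F_int.support.filter (fun k => 6 ≤ k), (2 * (k : ℤ) - 9) * F_int k)
        - 2 * ∑ k ∈ F_ext.support, (k : ℤ) * F_ext k
        - 4 * (D₂ : ℤ) - 3 * (D₃ : ℤ) - 2 * (F_int 4 : ℤ) := by
  set S6 := F_int.support.filter (fun k => 6 ≤ k) with hS6
  -- abbreviations for the sums over k ≥ 6
  set a : ℤ := ∑ k ∈ S6, (k : ℤ) * F_int k with ha
  set b : ℤ := ∑ k ∈ S6, (F_int k : ℤ) with hb
  have hb0 : 0 ≤ b := Finset.sum_nonneg (fun k _ => by positivity)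
  -- decompose Σ k·F_int k
  have hA : ∑ k ∈ F_int.support, (k : ℤ) * F_int k
      = 2 * F_int 2 + 4 * F_int 4 + a := by
    rw [sum_support_split F_int hvan (fun k => (k : ℤ) * F_int k)
      (fun k hk => by simp [hk])]
    push_cast; ring
  -- decompose Σ F_int k
  have hB : ∑ k ∈ F_int.support, (F_int k : ℤ) = F_int 2 + F_int 4 + b := by
    rw [sum_support_split F_int hvan (fun k => (F_int k : ℤ))
      (fun k hk => by simp [hk])]
  -- decompose Σ_{k≥4} F_int k
  have hC : ∑ k ∈ F_int.support.filter (fun k => 4 ≤ k), (F_int k : ℤ)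
      = F_int 4 + b := by
    have := sum_support_split F_int hvan
      (fun k => if 4 ≤ k then (F_int k : ℤ) else 0)
      (fun k hk => by simp [hk])
    rw [← Finset.sum_filter] at this
    rw [this]
    have : ∑ k ∈ S6, (if 4 ≤ k then (F_int k : ℤ) else 0)
        = ∑ k ∈ S6, (F_int k : ℤ) := by
      refine Finset.sum_congr rfl (fun k hk => ?_)
      have : 6 ≤ k := (Finset.mem_filter.mp hk).2
      rw [if_pos (by omega)]
    rw [this]; norm_num
    exact hb.symm
  -- the k ≥ 6 sum in the goal
  have hD : ∑ k ∈ S6, (2 * (k : ℤ) - 9) * F_int k = 2 * a - 9 * b := by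
    rw [ha, hb, Finset.mul_sum, Finset.mul_sum, ← Finset.sum_sub_distrib]
    exact Finset.sum_congr rfl (fun k _ => by ring)
  -- cast hypotheses to ℤ
  have h1' : 3 * (L : ℤ) = (2 * F_int 2 + 4 * F_int 4 + a)
      + ∑ k ∈ F_ext.support, (k : ℤ) * F_ext k := by
    rw [← hA]
    have := congrArg (fun n : ℕ => (n : ℤ)) h1
    push_cast at this
    convert this using 2
  have h3' : 3 * (R : ℤ) ≥ 3 * D₂ + 6 * D₃ + ((F_int 4 : ℤ) + b) := by
    rw [← hC]
    have := (Nat.cast_le (α := ℤ)).mpr h3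
    push_cast at this
    convert this using 2
  have h2' : (F_int 2 : ℤ) = D₂ + 3 * D₃ := by exact_mod_cast h2
  rw [hB, hD]
  linarith
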